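/- The exact solution u(x,t) = 4 atan[t · sech(x)] satisfies the sine-Gordon equation u_tt = u_xx − sin(u) for all (x,t) ∈ ℝ × ℝ, together with u(x,0) = 0 and u_t(x,0) = 4 sech(x). -/

import Mathlib

open Real

private lemma sin_four_arctan (s : ℝ) :
    Real.sin (4 * Real.arctan s) = 4 * s * (1 - s ^ 2) / (1 + s ^ 2) ^ 2 := by
  have h4 : (4:ℝ) * Real.arctan s = 2 * (2 * Real.arctan s) := by ring
  have hpos : (0:ℝ) < 1 + s ^ 2 := by positivity
  have hsq : Real.sqrt (1 + s ^ 2) ^ 2 = 1 + s ^ 2 := Real.sq_sqrt hpos.le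
  rw [h4, Real.sin_two_mul, Real.sin_two_mul, Real.cos_two_mul,
    Real.sin_arctan, Real.cos_arctan]
  have hne : Real.sqrt (1 + s ^ 2) ≠ 0 := by positivity
  field_simp
  rw [show Real.sqrt (1 + s ^ 2) ^ 4 = (Real.sqrt (1 + s ^ 2) ^ 2) ^ 2 by ring, hsq]
  ring

-- first time derivative
private lemma ut (x t : ℝ) :
    HasDerivAt (fun τ : ℝ => 4 * Real.arctan (τ * (Real.cosh x)⁻¹))
      (4 * Real.cosh x / (Real.cosh x ^ 2 + t ^ 2)) t := by
  have hc : Real.cosh x ≠ 0 := (Real.cosh_pos x).ne'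
  have h1 : HasDerivAt (fun τ : ℝ => τ * (Real.cosh x)⁻¹) ((Real.cosh x)⁻¹) t := by
    simpa using (hasDerivAt_id t).mul_const (Real.cosh x)⁻¹
  have h2 := (h1.arctan).const_mul (4:ℝ)
  refine h2.congr_deriv ?_
  have hD : Real.cosh x ^ 2 + t ^ 2 ≠ 0 := by positivity
  field_simp

private lemma utt (x t : ℝ) :
    HasDerivAt (fun τ : ℝ => 4 * Real.cosh x / (Real.cosh x ^ 2 + τ ^ 2))
      (-(8 * t * Real.cosh x) / (Real.cosh x ^ 2 + t ^ 2) ^ 2) t := by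
  have hD : Real.cosh x ^ 2 + t ^ 2 ≠ 0 := by positivity
  have hden : HasDerivAt (fun τ : ℝ => Real.cosh x ^ 2 + τ ^ 2) (2 * t) t := by
    simpa using ((hasDerivAt_pow 2 t))
  have := (hasDerivAt_const t (4 * Real.cosh x)).div hden hD
  refine this.congr_deriv ?_
  field_simp
  ring

-- first x derivative
private lemma ux (t x : ℝ) :
    HasDerivAt (fun ξ : ℝ => 4 * Real.arctan (t * (Real.cosh ξ)⁻¹))
      (-(4 * t * Real.sinh x) / (Real.cosh x ^ 2 + t ^ 2)) x := by
  have hc : Real.cosh x ≠ 0 := (Real.cosh_pos x).ne'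
  have h0 : HasDerivAt Real.cosh (Real.sinh x) x := Real.hasDerivAt_cosh x
  have h1 : HasDerivAt (fun ξ : ℝ => (Real.cosh ξ)⁻¹)
      (-(Real.sinh x) / Real.cosh x ^ 2) x := h0.inv hc
  have h2 : HasDerivAt (fun ξ : ℝ => t * (Real.cosh ξ)⁻¹)
      (t * (-(Real.sinh x) / Real.cosh x ^ 2)) x := h1.const_mul t
  have h3 := (h2.arctan).const_mul (4:ℝ)
  refine h3.congr_deriv ?_
  have hD : Real.cosh x ^ 2 + t ^ 2 ≠ 0 := by positivity
  field_simp

private lemma uxx (t x : ℝ) :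
    HasDerivAt (fun ξ : ℝ => -(4 * t * Real.sinh ξ) / (Real.cosh ξ ^ 2 + t ^ 2))
      ((-(4 * t * Real.cosh x) * (Real.cosh x ^ 2 + t ^ 2)
        - -(4 * t * Real.sinh x) * (2 * Real.sinh x * Real.cosh x))
        / (Real.cosh x ^ 2 + t ^ 2) ^ 2) x := by
  have hD : Real.cosh x ^ 2 + t ^ 2 ≠ 0 := by positivity
  have hnum : HasDerivAt (fun ξ : ℝ => -(4 * t * Real.sinh ξ))
      (-(4 * t * Real.cosh x)) x := by
    exact (((Real.hasDerivAt_sinh x).const_mul (4 * t)).neg)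
  have hden : HasDerivAt (fun ξ : ℝ => Real.cosh ξ ^ 2 + t ^ 2)
      (2 * Real.sinh x * Real.cosh x) x := by
    have h := ((Real.hasDerivAt_cosh x).pow 2).add_const (t ^ 2)
    refine h.congr_deriv ?_
    ring
  exact hnum.div hden hD

/-- The function `u(x,t) = 4 atan(t · sech x)` is the soliton solution of the
sine-Gordon equation for the critical parameter `γ = 1`. -/
theorem stmt18 (u : ℝ → ℝ → ℝ)
    (hu : ∀ x t : ℝ, u x t = 4 * Real.arctan (t * (Real.cosh x)⁻¹)) :
    (∀ x t : ℝ,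
      deriv (deriv (fun τ => u x τ)) t =
        deriv (deriv (fun ξ => u ξ t)) x - Real.sin (u x t)) ∧
    (∀ x : ℝ, u x 0 = 0) ∧
    (∀ x : ℝ, deriv (fun τ => u x τ) 0 = 4 * (Real.cosh x)⁻¹) := by
  have hfun : ∀ x : ℝ, (fun τ => u x τ) = fun τ => 4 * Real.arctan (τ * (Real.cosh x)⁻¹) := by
    intro x; funext τ; exact hu x τ
  have hfun' : ∀ t : ℝ, (fun ξ => u ξ t) = fun ξ => 4 * Real.arctan (t * (Real.cosh ξ)⁻¹) := by
    intro t; funext ξ; exact hu ξ t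
  have hdt : ∀ x : ℝ, deriv (fun τ => u x τ)
      = fun t => 4 * Real.cosh x / (Real.cosh x ^ 2 + t ^ 2) := by
    intro x; funext t; rw [hfun x]; exact (ut x t).deriv
  have hdx : ∀ t : ℝ, deriv (fun ξ => u ξ t)
      = fun x => -(4 * t * Real.sinh x) / (Real.cosh x ^ 2 + t ^ 2) := by
    intro t; funext x; rw [hfun' t]; exact (ux t x).deriv
  refine ⟨?_, ?_, ?_⟩
  · intro x t
    rw [hdt x, hdx t, (utt x t).deriv, (uxx t x).deriv, hu x t, sin_four_arctan]
    have hc : Real.cosh x ≠ 0 := (Real.cosh_pos x).ne'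
    have hD : Real.cosh x ^ 2 + t ^ 2 ≠ 0 := by positivity
    have hid : Real.cosh x ^ 2 = Real.sinh x ^ 2 + 1 := Real.cosh_sq x
    have hsin : 4 * (t * (Real.cosh x)⁻¹) * (1 - (t * (Real.cosh x)⁻¹) ^ 2)
        / (1 + (t * (Real.cosh x)⁻¹) ^ 2) ^ 2
        = 4 * t * Real.cosh x * (Real.cosh x ^ 2 - t ^ 2)
          / (Real.cosh x ^ 2 + t ^ 2) ^ 2 := by
      rw [div_eq_div_iff (by positivity) (by positivity)]
      field_simp
    rw [hsin, div_sub_div_same]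
    rw [div_eq_div_iff (by positivity) (by positivity)]
    ring_nf
    linear_combination (8 * t * Real.cosh x) * (Real.cosh x ^ 2 + t ^ 2) ^ 2 * hid
  · intro x
    rw [hu x 0]
    simp
  · intro x
    rw [hdt x]
    have hc : Real.cosh x ≠ 0 := (Real.cosh_pos x).ne'
    field_simp
    ring
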